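/- With M = S³ × S³, f(z,w) = z₀·conj(w₀) + z₁·conj(w₁), the map f is transversal to the ray [0,∞) ⊂ ℂ: at any point (z,w) with f(z,w) = c > 0, the derivative of t ↦ f(e^{it}z, w) at t = 0 equals ic, which together with the regularity of 0 implies f⁻¹([0,∞)) is a 5-dimensional submanifold with boundary N = f⁻¹(0). -/
import Mathlib


open Complex

noncomputable def hermPairing (p : (ℂ × ℂ) × (ℂ × ℂ)) : ℂ :=
  p.1.1 * (starRingEnd ℂ) p.2.1 + p.1.2 * (starRingEnd ℂ) p.2.2

def sphere3 : Set (ℂ × ℂ) := {z | Complex.normSq z.1 + Complex.normSq z.2 = 1}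

/-- v is a tangent vector of S³ at z: re⟨v,z⟩ = 0. -/
def tangentS3 (z v : ℂ × ℂ) : Prop :=
  (v.1 * (starRingEnd ℂ) z.1 + v.2 * (starRingEnd ℂ) z.2).re = 0

/- Transversality of f = hermPairing to the ray [0,∞) ⊂ ℂ: at any point
(z,w) ∈ S³ × S³ with f(z,w) = c > 0 real, the derivative at t = 0 of
t ↦ f(e^{it}z, w) equals i·c; in particular this derivative is realised by a
tangent vector of S³ × S³, so that (together with the regularity of 0) the image
of the differential of f together with the tangent line ℝ of the ray spans ℂ,
and f⁻¹([0,∞)) is a manifold with boundary N = f⁻¹(0). -/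
theorem s3s3_hermitian_transversal_to_ray
    (z w : ℂ × ℂ) (hz : z ∈ sphere3) (hw : w ∈ sphere3)
    (c : ℝ) (hc : 0 < c) (hfc : hermPairing (z, w) = (c : ℂ)) :
    HasDerivAt
      (fun t : ℝ =>
        hermPairing ((Complex.exp (Complex.I * (t : ℂ)) * z.1,
                      Complex.exp (Complex.I * (t : ℂ)) * z.2), w))
      (Complex.I * (c : ℂ)) 0 ∧
    ∃ v : (ℂ × ℂ) × (ℂ × ℂ),
      tangentS3 z v.1 ∧ tangentS3 w v.2 ∧
      fderiv ℝ hermPairing (z, w) v = Complex.I * (c : ℂ) := by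
  have hfc' : z.1 * (starRingEnd ℂ) w.1 + z.2 * (starRingEnd ℂ) w.2 = (c : ℂ) := hfc
  constructor
  · -- the curve equals t ↦ exp(I t) * c
    have heq : (fun t : ℝ =>
        hermPairing ((Complex.exp (Complex.I * (t : ℂ)) * z.1,
                      Complex.exp (Complex.I * (t : ℂ)) * z.2), w))
        = fun t : ℝ => Complex.exp (Complex.I * (t : ℂ)) * (c : ℂ) := by
      funext t
      simp only [hermPairing]
      rw [← hfc']; ring
    rw [heq]
    have h1 : HasDerivAt (fun s : ℂ => Complex.exp (Complex.I * s) * (c : ℂ))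
        (Complex.I * (c : ℂ)) 0 := by
      have := (((Complex.hasDerivAt_exp (Complex.I * 0)).comp 0
        ((hasDerivAt_id (0 : ℂ)).const_mul Complex.I)).mul_const ((c : ℂ)))
      simpa using this
    have := h1.comp_ofReal (z := 0)
    simpa using this
  · refine ⟨((Complex.I * z.1, Complex.I * z.2), (0, 0)), ?_, ?_, ?_⟩
    · simp only [tangentS3]
      have : Complex.I * z.1 * (starRingEnd ℂ) z.1 + Complex.I * z.2 * (starRingEnd ℂ) z.2
          = Complex.I * ((Complex.normSq z.1 + Complex.normSq z.2 : ℝ) : ℂ) := by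
        rw [mul_assoc, mul_assoc, Complex.mul_conj, Complex.mul_conj]
        push_cast; ring
      rw [this, hz]
      simp
    · simp [tangentS3]
    · have hconj : Differentiable ℝ (starRingEnd ℂ) := Complex.conjCLE.differentiable
      have hd : Differentiable ℝ hermPairing := by
        unfold hermPairing; fun_prop
      set v : (ℂ × ℂ) × (ℂ × ℂ) := ((Complex.I * z.1, Complex.I * z.2), (0, 0)) with hv
      have hl : HasDerivAt (fun t : ℝ => (z, w) + t • v) v 0 := by
        simpa using ((hasDerivAt_id (0 : ℝ)).smul_const v).const_add (z, w)
      have hcomp : HasDerivAt (fun t : ℝ => hermPairing ((z, w) + t • v))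
          (fderiv ℝ hermPairing (z, w) v) 0 := by
        have h0 : HasFDerivAt hermPairing (fderiv ℝ hermPairing (z, w)) ((z, w) + (0:ℝ) • v) := by
          simpa using (hd (z, w)).hasFDerivAt
        exact h0.comp_hasDerivAt 0 hl
      have hexp : HasDerivAt (fun t : ℝ => hermPairing ((z, w) + t • v))
          (Complex.I * (c : ℂ)) 0 := by
        have heq : (fun t : ℝ => hermPairing ((z, w) + t • v))
            = fun t : ℝ => (1 + (t : ℂ) * Complex.I) * (c : ℂ) := by
          funext t
          simp only [hv, hermPairing, Prod.smul_mk, Prod.mk_add_mk, Prod.fst_add,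
            Prod.snd_add, Prod.smul_fst, Prod.smul_snd, Complex.real_smul, smul_zero,
            add_zero, smul_eq_mul]
          rw [← hfc']
          push_cast
          ring
        rw [heq]
        have h2 : HasDerivAt (fun s : ℂ => (1 + s * Complex.I) * (c : ℂ))
            (Complex.I * (c : ℂ)) 0 := by
          have := (((hasDerivAt_id (0 : ℂ)).mul_const Complex.I).const_add 1).mul_const ((c : ℂ))
          simpa using this
        simpa using h2.comp_ofReal (z := 0)
      exact hcomp.unique hexp
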